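/- Let R be a ring with identity and let e₁, …, eₙ be pairwise orthogonal idempotents summing to 1. Let I be a two-sided ideal of R such that for each i, the set eᵢIeᵢ has nilpotency index ≤ rᵢ (every product of rᵢ elements of eᵢIeᵢ is zero). Then every product of N elements of I is zero whenever N ≥ r₁ + r₂ + ⋯ + rₙ + n − 1. In particular, I is a nil ideal. -/

import Mathlib

section Aux

variable {R : Type*} [Ring R] {n : ℕ}

/-- Decorated product: `decProd e [x₁,…,x_N] [i₀,…,i_N] = e i₀ * x₁ * e i₁ * ⋯ * x_N * e i_N`. -/
def decProd (e : Fin n → R) : List R → List (Fin n) → R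
  | _, [] => 0
  | [], (i :: _) => e i
  | (x :: t), (i :: s) => e i * x * decProd e t s

variable {e : Fin n → R}

lemma decProd_absorb (hidem : ∀ i, e i * e i = e i) :
    ∀ (l : List R) (s : List (Fin n)) (i : Fin n), s.head? = some i →
      e i * decProd e l s = decProd e l s := by
  intro l s i hs
  match l, s with
  | _, [] => simp at hs
  | [], (j :: s') =>
      obtain rfl : j = i := by simpa using hs
      simp [decProd, hidem j]
  | (x :: t), (j :: s') =>
      obtain rfl : j = i := by simpa using hs
      show e j * (e j * x * _) = _
      rw [← mul_assoc, ← mul_assoc, hidem j]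
      rfl

lemma decProd_first (I : TwoSidedIdeal R) :
    ∀ (l : List R) (s : List (Fin n)) (i : Fin n),
      s.length = l.length + 1 → (∀ x ∈ l, x ∈ I) → i ∈ s →
      ∃ (u : R) (l' : List R) (s' : List (Fin n)),
        (∀ x ∈ l', x ∈ I) ∧ s'.length = l'.length + 1 ∧ l'.length ≤ l.length ∧
        s'.head? = some i ∧ s'.count i = s.count i ∧
        decProd e l s = u * decProd e l' s' := by
  intro l
  induction l with
  | nil =>
      intro s i hlen hmem hi
      match s with
      | [j] =>
          obtain rfl : i = j := by simpa using hi
          exact ⟨1, [], [i], by simp, rfl, le_rfl, rfl, rfl, (one_mul _).symm⟩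
  | cons x t ih =>
      intro s i hlen hmem hi
      match s with
      | (j :: s₀) =>
          by_cases hji : j = i
          · subst hji
            exact ⟨1, x :: t, j :: s₀, hmem, hlen, le_rfl, rfl, rfl, (one_mul _).symm⟩
          · have hi' : i ∈ s₀ := by
              rcases List.mem_cons.mp hi with h | h
              · exact absurd h.symm hji
              · exact h
            obtain ⟨u, l', s', h1, h2, h3, h4, h5, h6⟩ :=
              ih s₀ i (by simpa using hlen) (fun y hy => hmem y (List.mem_cons_of_mem _ hy)) hi'
            refine ⟨e j * x * u, l', s', h1, h2, h3.trans (Nat.le_succ _), h4, ?_, ?_⟩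
            · rw [h5, List.count_cons]
              simp [Ne.symm hji, hji]
            · show e j * x * decProd e t s₀ = _
              rw [h6]
              simp [mul_assoc]

lemma decProd_chunks (hidem : ∀ i, e i * e i = e i) (I : TwoSidedIdeal R) :
    ∀ (N : ℕ) (l : List R) (s : List (Fin n)) (i : Fin n),
      l.length ≤ N → s.length = l.length + 1 → (∀ x ∈ l, x ∈ I) →
      s.head? = some i →
      ∃ (m : List R) (w : R),
        (∀ y ∈ m, ∃ x ∈ I, y = e i * x * e i) ∧
        m.length + 1 = s.count i ∧
        decProd e l s = m.prod * w := by
  intro N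
  induction N with
  | zero =>
      intro l s i hN hlen hmem hhead
      match l, s with
      | [], [j] =>
          obtain rfl : j = i := by simpa using hhead
          exact ⟨[], e j, by simp, by simp, by simp [decProd]⟩
      | (x :: t), s =>
          simp at hN
  | succ N ih =>
      intro l s i hN hlen hmem hhead
      match l, s with
      | [], [j] =>
          obtain rfl : j = i := by simpa using hhead
          exact ⟨[], e j, by simp, by simp, by simp [decProd]⟩
      | (x :: t), (j :: s₀) =>
          obtain rfl : j = i := by simpa using hhead
          have hlen₀ : s₀.length = t.length + 1 := by simpa using hlen
          have hmem₀ : ∀ y ∈ t, y ∈ I := fun y hy => hmem y (List.mem_cons_of_mem _ hy)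
          by_cases hmemi : j ∈ s₀
          · obtain ⟨u, l', s', h1, h2, h3, h4, h5, h6⟩ :=
              decProd_first I t s₀ j hlen₀ hmem₀ hmemi
            have hN' : l'.length ≤ N := by
              simp only [List.length_cons] at hN
              omega
            obtain ⟨m', w, hm1, hm2, hm3⟩ := ih l' s' j hN' h2 h1 h4
            refine ⟨(e j * (x * u) * e j) :: m', w, ?_, ?_, ?_⟩
            · intro y hy
              rcases List.mem_cons.mp hy with h | h
              · exact ⟨x * u, I.mul_mem_right _ _ (hmem x List.mem_cons_self), h⟩
              · exact hm1 y h
            · simp only [List.length_cons, List.count_cons_self]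
              omega
            · show e j * x * decProd e t s₀ = _
              rw [h6, ← decProd_absorb hidem l' s' j h4, hm3]
              simp [mul_assoc]
          · refine ⟨[], decProd e (x :: t) (j :: s₀), by simp, ?_, (one_mul _).symm⟩
            simp [List.count_cons_self, List.count_eq_zero_of_not_mem hmemi]

lemma decProd_zero (hidem : ∀ i, e i * e i = e i) (I : TwoSidedIdeal R) (r : Fin n → ℕ)
    (hr : ∀ i, ∀ l : List R, (∀ y ∈ l, ∃ x ∈ I, y = e i * x * e i) →
      l.length = r i → l.prod = 0)
    (l : List R) (s : List (Fin n)) (i : Fin n)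
    (hlen : s.length = l.length + 1) (hmem : ∀ x ∈ l, x ∈ I)
    (hcount : r i + 1 ≤ s.count i) : decProd e l s = 0 := by
  have hi : i ∈ s := by
    rw [← List.count_pos_iff]
    omega
  obtain ⟨u, l', s', h1, h2, h3, h4, h5, h6⟩ := decProd_first I l s i hlen hmem hi
  obtain ⟨m, w, hm1, hm2, hm3⟩ := decProd_chunks hidem I l'.length l' s' i le_rfl h2 h1 h4
  have hri : r i ≤ m.length := by omega
  have hz : (m.take (r i)).prod = 0 := by
    refine hr i _ (fun y hy => hm1 y (List.take_subset _ _ hy)) ?_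
    rw [List.length_take]
    omega
  have hmz : m.prod = 0 := by
    conv_lhs => rw [← List.take_append_drop (r i) m]
    rw [List.prod_append, hz, zero_mul]
  rw [h6, hm3, hmz, zero_mul, mul_zero]

lemma sum_count_eq_length : ∀ s : List (Fin n), ∑ i, s.count i = s.length := by
  intro s
  induction s with
  | nil => simp
  | cons j t ih =>
      simp only [List.count_cons, List.length_cons, Finset.sum_add_distrib, ih]
      simp

lemma sum_decProd (hsum : ∑ i, e i = 1) :
    ∀ l : List R, ∑ f : Fin (l.length + 1) → Fin n, decProd e l (List.ofFn f) = l.prod := by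
  intro l
  induction l with
  | nil =>
      rw [show ([] : List R).prod = 1 from rfl, ← hsum]
      refine Fintype.sum_equiv (Equiv.funUnique (Fin 1) (Fin n)) _ _ (fun f => ?_)
      simp [decProd, List.ofFn_succ]
  | cons x t ih =>
      have key : ∀ (i : Fin n) (g : Fin (t.length + 1) → Fin n),
          decProd e (x :: t) (List.ofFn (Fin.cons i g)) = e i * x * decProd e t (List.ofFn g) := by
        intro i g
        have hofn : List.ofFn (Fin.cons i g : Fin (t.length + 1 + 1) → Fin n)
            = i :: List.ofFn g := by
          rw [List.ofFn_succ]
          simp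
        rw [hofn]
        rfl
      show (∑ f : Fin (t.length + 1 + 1) → Fin n, decProd e (x :: t) (List.ofFn f))
          = (x :: t).prod
      calc ∑ f : Fin (t.length + 1 + 1) → Fin n, decProd e (x :: t) (List.ofFn f)
          = ∑ p : Fin n × (Fin (t.length + 1) → Fin n),
              decProd e (x :: t) (List.ofFn (Fin.cons p.1 p.2)) := by
            exact (Equiv.sum_comp (Fin.consEquiv (fun _ : Fin (t.length + 1 + 1) => Fin n))
              (fun f => decProd e (x :: t) (List.ofFn f))).symm
        _ = ∑ i : Fin n, ∑ g : Fin (t.length + 1) → Fin n,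
              (e i * x) * decProd e t (List.ofFn g) := by
            rw [Fintype.sum_prod_type]
            simp_rw [key]
        _ = ∑ i : Fin n, (e i * x) * t.prod := by
            simp_rw [← Finset.mul_sum, ih]
        _ = (∑ i, e i) * (x * t.prod) := by
            rw [Finset.sum_mul]
            simp [mul_assoc]
        _ = (x :: t).prod := by rw [hsum, one_mul, List.prod_cons]

end Aux

/-- pairwise orthogonal idempotents e₁,…,eₙ summing to 1; if each
eᵢIeᵢ has nilpotency index ≤ rᵢ, then every product of N elements of the
two-sided ideal I vanishes whenever N ≥ r₁ + ⋯ + rₙ + n − 1. -/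
theorem stmt1 {R : Type*} [Ring R] (n : ℕ) (e : Fin n → R)
    (hidem : ∀ i, e i * e i = e i)
    (horth : ∀ i j, i ≠ j → e i * e j = 0)
    (hsum : ∑ i, e i = 1)
    (I : TwoSidedIdeal R) (r : Fin n → ℕ)
    (hr : ∀ i, ∀ l : List R, (∀ y ∈ l, ∃ x ∈ I, y = e i * x * e i) →
      l.length = r i → l.prod = 0) :
    ∀ N : ℕ, (∑ i, r i) + n - 1 ≤ N →
      ∀ l : List R, (∀ x ∈ l, x ∈ I) → l.length = N → l.prod = 0 := by
  intro N hN l hmemI hlen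
  rcases Nat.eq_zero_or_pos n with hn | hn
  · subst hn
    have h10 : (1 : R) = 0 := by simpa using hsum.symm
    calc l.prod = l.prod * 1 := (mul_one _).symm
      _ = l.prod * 0 := by rw [h10]
      _ = 0 := mul_zero _
  · rw [← sum_decProd hsum l]
    apply Finset.sum_eq_zero
    intro f _
    have hslen : (List.ofFn f).length = l.length + 1 := by simp
    have hcnt : ∃ i, r i + 1 ≤ (List.ofFn f).count i := by
      by_contra h
      push_neg at h
      have h1 : ∑ i, (List.ofFn f).count i ≤ ∑ i, r i :=
        Finset.sum_le_sum (fun i _ => by have := h i; omega)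
      rw [sum_count_eq_length] at h1
      omega
    obtain ⟨i, hi⟩ := hcnt
    exact decProd_zero hidem I r hr l (List.ofFn f) i hslen hmemI hi
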